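/- Fix a natural number n > 2 and let A_n = {⊥, a_1, …, a_n, ⊤} be the chain ⊥ < a_1 < ⋯ < a_n < ⊤ equipped with the operations: x·y = a_1 if x, y ∉ {⊥, ⊤}, and x·y = min{x, y} otherwise; x → y = ⊤ if x ≤ y, x → y = y if (x > y and y = ⊥) or (x = ⊤ and x > y), and x → y = a_n if ⊤ > x > y > ⊥; together with ∧ = min and ∨ = max. Then A_n is a bounded commutative integral residuated lattice, the map t(x) = (x → x·x) → x·x is a nucleus on A_n, and a_2 < t(a_2) < (a_2 → ⊥) → ⊥; in particular t is distinct from the identity map and from the double negation map x ↦ (x → ⊥) → ⊥. -/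

import Mathlib

/-- Product on the chain `⊥ = 0 < a₁ = 1 < ⋯ < aₙ = n < ⊤ = n+1` (as `Fin (n+2)`):
`x * y = a₁` if neither `x` nor `y` is `⊥` or `⊤`, and `x * y = min x y` otherwise. -/
def rmul (n : ℕ) (x y : Fin (n + 2)) : Fin (n + 2) :=
  if x = 0 ∨ y = 0 then 0
  else if x = Fin.last (n + 1) then y
  else if y = Fin.last (n + 1) then x
  else 1

/-- Residuum on the chain `⊥ = 0 < a₁ = 1 < ⋯ < aₙ = n < ⊤ = n+1`. -/
def rimp (n : ℕ) (x y : Fin (n + 2)) : Fin (n + 2) :=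
  if x ≤ y then Fin.last (n + 1)
  else if y = 0 then 0
  else if x = Fin.last (n + 1) then y
  else ⟨n, by omega⟩

/-- The term `t(x) = (x ⇨ x·x) ⇨ x·x`. -/
def tnuc (n : ℕ) (x : Fin (n + 2)) : Fin (n + 2) :=
  rimp n (rimp n x (rmul n x x)) (rmul n x x)

section helpers
variable {n : ℕ}

lemma val2 (hn : 2 < n) : ((2 : Fin (n+2)) : ℕ) = 2 := by
  show (2 : ℕ) % (n+2) = 2
  exact Nat.mod_eq_of_lt (by omega)

lemma last_ne_zero' : Fin.last (n+1) ≠ (0 : Fin (n+2)) := by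
  simp [Fin.ext_iff]

lemma fone_ne_zero : (1 : Fin (n+2)) ≠ 0 :=
  one_ne_zero

lemma one_ne_last (hn : 1 ≤ n) : (1 : Fin (n+2)) ≠ Fin.last (n+1) := by
  simp only [Fin.ne_iff_vne, Fin.val_last, Fin.val_one]; omega

lemma rmul_zero_left (y : Fin (n+2)) : rmul n 0 y = 0 := by simp [rmul]

lemma rmul_zero_right (x : Fin (n+2)) : rmul n x 0 = 0 := by simp [rmul]

lemma rmul_last_left (y : Fin (n+2)) : rmul n (Fin.last (n+1)) y = y := by
  rcases eq_or_ne y 0 with rfl | h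
  · simp [rmul]
  · simp [rmul, h, last_ne_zero']

lemma rmul_last_right (x : Fin (n+2)) : rmul n x (Fin.last (n+1)) = x := by
  rcases eq_or_ne x 0 with rfl | h
  · simp [rmul]
  · rcases eq_or_ne x (Fin.last (n+1)) with rfl | h2
    · simp [rmul, h, last_ne_zero']
    · simp [rmul, h, h2, last_ne_zero']

lemma rmul_mid {x y : Fin (n+2)} (hx0 : x ≠ 0) (hxL : x ≠ Fin.last (n+1))
    (hy0 : y ≠ 0) (hyL : y ≠ Fin.last (n+1)) : rmul n x y = 1 := by
  simp [rmul, hx0, hxL, hy0, hyL]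

lemma rimp_of_le {x y : Fin (n+2)} (h : x ≤ y) : rimp n x y = Fin.last (n+1) := by
  simp [rimp, h]

lemma rimp_zero_right {x : Fin (n+2)} (h : x ≠ 0) : rimp n x 0 = 0 := by
  have : ¬ x ≤ 0 := by simpa [Fin.le_zero_iff] using h
  simp [rimp, this]

lemma rimp_last_left {y : Fin (n+2)} (h1 : ¬ Fin.last (n+1) ≤ y) (h2 : y ≠ 0) :
    rimp n (Fin.last (n+1)) y = y := by
  simp [rimp, h1, h2]

lemma rimp_mid {x y : Fin (n+2)} (h1 : ¬ x ≤ y) (h2 : y ≠ 0)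
    (h3 : x ≠ Fin.last (n+1)) : rimp n x y = ⟨n, by omega⟩ := by
  simp [rimp, h1, h2, h3]

lemma tnuc_eq (hn : 2 ≤ n) (x : Fin (n+2)) :
    tnuc n x = if x ≤ 1 ∨ x = Fin.last (n+1) then x else ⟨n, by omega⟩ := by
  rcases eq_or_ne x 0 with rfl | hx0
  · have h1 : rmul n (0:Fin (n+2)) 0 = 0 := rmul_zero_left 0
    have h2 : rimp n (0:Fin (n+2)) 0 = Fin.last (n+1) := rimp_of_le le_rfl
    have : (0 : Fin (n+2)) ≤ 1 := by simp [Fin.le_def]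
    simp [tnuc, h1, h2, rimp_zero_right last_ne_zero', this]
  · rcases eq_or_ne x (Fin.last (n+1)) with rfl | hxL
    · have h1 : rmul n (Fin.last (n+1)) (Fin.last (n+1)) = Fin.last (n+1) :=
        rmul_last_left _
      simp [tnuc, h1, rimp_of_le le_rfl]
    · have hm : rmul n x x = 1 := rmul_mid hx0 hxL hx0 hxL
      rcases eq_or_ne x 1 with rfl | hx1
      · have h2 : rimp n (1:Fin (n+2)) 1 = Fin.last (n+1) := rimp_of_le le_rfl
        have h3 : ¬ Fin.last (n+1) ≤ (1 : Fin (n+2)) := by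
          simp only [Fin.le_def, Fin.val_last, Fin.val_one]; omega
        have : (1 : Fin (n+2)) ≤ 1 := le_rfl
        rw [tnuc, hm, h2, rimp_last_left h3 fone_ne_zero, if_pos (Or.inl this)]
      · have hx1' : ¬ x ≤ 1 := by
          simp only [Fin.le_def, Fin.val_one, not_le]
          rcases Nat.lt_or_ge 1 x.val with h | h
          · exact h
          · exfalso
            interval_cases hv : x.val
            · exact hx0 (Fin.ext (by simpa using hv))
            · exact hx1 (Fin.ext (by simpa using hv))
        have h2 : rimp n x 1 = ⟨n, by omega⟩ := rimp_mid hx1' fone_ne_zero hxL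
        have h3 : ¬ (⟨n, by omega⟩ : Fin (n+2)) ≤ 1 := by
          simp [Fin.le_def, Fin.val_one]; omega
        have h4 : (⟨n, by omega⟩ : Fin (n+2)) ≠ Fin.last (n+1) := by
          simp [Fin.ext_iff, Fin.val_last]
        have h5 : rimp n (⟨n, by omega⟩ : Fin (n+2)) 1 = ⟨n, by omega⟩ :=
          rimp_mid h3 fone_ne_zero h4
        rw [tnuc, hm, h2, h5, if_neg]
        push_neg
        exact ⟨lt_of_not_ge hx1', hxL⟩

lemma tnuc_zero (hn : 2 ≤ n) : tnuc n (0 : Fin (n+2)) = 0 := by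
  rw [tnuc_eq hn]; simp [Fin.le_def]

lemma tnuc_last (hn : 2 ≤ n) : tnuc n (Fin.last (n+1)) = Fin.last (n+1) := by
  rw [tnuc_eq hn]; simp

lemma tnuc_mid_ne (hn : 2 ≤ n) {x : Fin (n+2)} (hx0 : x ≠ 0)
    (hxL : x ≠ Fin.last (n+1)) :
    tnuc n x ≠ 0 ∧ tnuc n x ≠ Fin.last (n+1) := by
  rw [tnuc_eq hn]
  split_ifs with h
  · exact ⟨hx0, hxL⟩
  · constructor
    · simp [Fin.ext_iff]; omega
    · simp [Fin.ext_iff, Fin.val_last]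

end helpers


/-- For `n > 2`, the chain `Aₙ` with the above operations is a bounded commutative
integral residuated lattice (the lattice being the linear order on `Fin (n+2)` with
`⊥ = 0`, `⊤ = Fin.last (n+1)`), the map `t(x) = (x ⇨ x·x) ⇨ x·x` is a nucleus on it,
and `a₂ < t a₂ < ¬¬a₂`; in particular `t` differs from the identity and from the
double negation. -/
theorem chain_nontrivial_nucleus (n : ℕ) (hn : 2 < n) :
    (∀ x y : Fin (n + 2), rmul n x y = rmul n y x) ∧
    (∀ x y z : Fin (n + 2), rmul n (rmul n x y) z = rmul n x (rmul n y z)) ∧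
    (∀ x : Fin (n + 2), rmul n x (Fin.last (n + 1)) = x) ∧
    (∀ x y z : Fin (n + 2), rmul n x y ≤ z ↔ x ≤ rimp n y z) ∧
    (∀ x : Fin (n + 2), x ≤ tnuc n x) ∧
    (∀ x y : Fin (n + 2), x ≤ y → tnuc n x ≤ tnuc n y) ∧
    (∀ x : Fin (n + 2), tnuc n (tnuc n x) = tnuc n x) ∧
    (∀ x y : Fin (n + 2), rmul n (tnuc n x) (tnuc n y) ≤ tnuc n (rmul n x y)) ∧
    ((2 : Fin (n + 2)) < tnuc n 2 ∧
      tnuc n 2 < rimp n (rimp n 2 0) 0) ∧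
    tnuc n ≠ id ∧
    tnuc n ≠ fun x => rimp n (rimp n x 0) 0 := by
  have hn2 : 2 ≤ n := le_of_lt hn
  have hone_ne_zero : (1 : Fin (n+2)) ≠ 0 := fone_ne_zero
  have hone_ne_last : (1 : Fin (n+2)) ≠ Fin.last (n+1) := one_ne_last (by omega)
  -- commutativity
  have comm : ∀ x y : Fin (n + 2), rmul n x y = rmul n y x := by
    intro x y
    unfold rmul
    split_ifs <;> simp_all
  -- associativity
  have assoc : ∀ x y z : Fin (n + 2), rmul n (rmul n x y) z = rmul n x (rmul n y z) := by
    intro x y z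
    rcases eq_or_ne x 0 with rfl | hx0
    · simp [rmul_zero_left]
    rcases eq_or_ne y 0 with rfl | hy0
    · simp [rmul_zero_left, rmul_zero_right]
    rcases eq_or_ne z 0 with rfl | hz0
    · simp [rmul_zero_right]
    rcases eq_or_ne x (Fin.last (n+1)) with rfl | hxL
    · rw [rmul_last_left, rmul_last_left]
    rcases eq_or_ne y (Fin.last (n+1)) with rfl | hyL
    · rw [rmul_last_right, rmul_last_left]
    rcases eq_or_ne z (Fin.last (n+1)) with rfl | hzL
    · rw [rmul_last_right, rmul_last_right]
    · rw [rmul_mid hx0 hxL hy0 hyL, rmul_mid hy0 hyL hz0 hzL,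
        rmul_mid hone_ne_zero hone_ne_last hz0 hzL,
        rmul_mid hx0 hxL hone_ne_zero hone_ne_last]
  -- residuation
  have resid : ∀ x y z : Fin (n + 2), rmul n x y ≤ z ↔ x ≤ rimp n y z := by
    intro x y z
    rcases le_or_gt y z with hyz | hyz
    · rw [rimp_of_le hyz]
      have hle : rmul n x y ≤ z := by
        refine le_trans ?_ hyz
        rcases eq_or_ne x 0 with rfl | hx0
        · simp [rmul_zero_left, Fin.zero_le]
        rcases eq_or_ne y 0 with rfl | hy0
        · simp [rmul_zero_right, Fin.zero_le]
        rcases eq_or_ne x (Fin.last (n+1)) with rfl | hxL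
        · rw [rmul_last_left]
        rcases eq_or_ne y (Fin.last (n+1)) with rfl | hyL
        · rw [rmul_last_right]; exact Fin.le_last x
        · rw [rmul_mid hx0 hxL hy0 hyL]
          have : y.val ≠ 0 := fun h => hy0 (Fin.ext (by simpa using h))
          simp only [Fin.le_def, Fin.val_one]; omega
      simp [hle, Fin.le_last]
    · have hnle : ¬ y ≤ z := not_le.mpr hyz
      have hy0 : y ≠ 0 := by
        intro h; subst h; exact absurd (Fin.zero_le z) hnle
      rcases eq_or_ne z 0 with rfl | hz0
      · rw [rimp_zero_right hy0]
        rw [Fin.le_zero_iff, Fin.le_zero_iff]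
        constructor
        · intro h
          by_contra hx0
          rcases eq_or_ne x (Fin.last (n+1)) with rfl | hxL
          · rw [rmul_last_left] at h; exact hy0 h
          rcases eq_or_ne y (Fin.last (n+1)) with rfl | hyL
          · rw [rmul_last_right] at h; exact hx0 h
          · rw [rmul_mid hx0 hxL hy0 hyL] at h; exact hone_ne_zero h
        · intro h; subst h; simp [rmul_zero_left]
      rcases eq_or_ne y (Fin.last (n+1)) with rfl | hyL
      · rw [rimp_last_left hnle hz0, rmul_last_right]
      · rw [rimp_mid hnle hz0 hyL]
        constructor
        · intro _h
          -- goal x ≤ aN, i.e. x ≠ last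
          by_contra hc
          have hxL : x = Fin.last (n+1) := by
            have := x.isLt
            simp only [Fin.le_def, not_le] at hc
            apply Fin.ext
            simp only [Fin.val_last]
            have : x.val > n := by simpa using hc
            omega
          subst hxL
          rw [rmul_last_left] at _h
          exact hnle _h
        · intro hx
          rcases eq_or_ne x 0 with rfl | hx0
          · simp [rmul_zero_left, Fin.zero_le]
          · have hxL : x ≠ Fin.last (n+1) := by
              intro h; subst h
              simp only [Fin.le_def, Fin.val_last] at hx
              omega
            rw [rmul_mid hx0 hxL hy0 hyL]
            have : z.val ≠ 0 := fun h => hz0 (Fin.ext (by simpa using h))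
            simp only [Fin.le_def, Fin.val_one]; omega
  -- closure
  have clos : ∀ x : Fin (n + 2), x ≤ tnuc n x := by
    intro x
    rw [tnuc_eq hn2]
    split_ifs with h
    · exact le_rfl
    · push_neg at h
      have hxL := h.2
      have : x.val < n + 1 := by
        have := x.isLt
        have : x.val ≠ n + 1 := fun hh => hxL (Fin.ext (by simpa [Fin.val_last] using hh))
        omega
      simp only [Fin.le_def]; omega
  -- monotone
  have mono : ∀ x y : Fin (n + 2), x ≤ y → tnuc n x ≤ tnuc n y := by
    intro x y hxy
    rw [tnuc_eq hn2, tnuc_eq hn2]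
    have hx := x.isLt; have hy := y.isLt
    split_ifs with h1 h2 h2 <;>
      simp_all only [Fin.le_def, Fin.ext_iff, Fin.val_last, Fin.val_one, not_or, not_le] <;>
      omega
  -- idempotent
  have idem : ∀ x : Fin (n + 2), tnuc n (tnuc n x) = tnuc n x := by
    intro x
    rw [tnuc_eq hn2 x]
    split_ifs with h
    · rw [tnuc_eq hn2]; simp [h]
    · rw [tnuc_eq hn2]
      have h1 : ¬ ((⟨n, by omega⟩ : Fin (n+2)) ≤ 1) := by
        simp [Fin.le_def, Fin.val_one]; omega
      have h2 : (⟨n, by omega⟩ : Fin (n+2)) ≠ Fin.last (n+1) := by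
        simp [Fin.ext_iff, Fin.val_last]
      simp [h1, h2]
  -- submultiplicative
  have submul : ∀ x y : Fin (n + 2), rmul n (tnuc n x) (tnuc n y) ≤ tnuc n (rmul n x y) := by
    intro x y
    rcases eq_or_ne x 0 with rfl | hx0
    · rw [tnuc_zero hn2, rmul_zero_left, rmul_zero_left, tnuc_zero hn2]
    rcases eq_or_ne y 0 with rfl | hy0
    · rw [tnuc_zero hn2, rmul_zero_right, rmul_zero_right, tnuc_zero hn2]
    rcases eq_or_ne x (Fin.last (n+1)) with rfl | hxL
    · rw [tnuc_last hn2, rmul_last_left, rmul_last_left]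
    rcases eq_or_ne y (Fin.last (n+1)) with rfl | hyL
    · rw [tnuc_last hn2, rmul_last_right, rmul_last_right]
    · obtain ⟨htx0, htxL⟩ := tnuc_mid_ne hn2 hx0 hxL
      obtain ⟨hty0, htyL⟩ := tnuc_mid_ne hn2 hy0 hyL
      rw [rmul_mid htx0 htxL hty0 htyL, rmul_mid hx0 hxL hy0 hyL]
      rw [tnuc_eq hn2]
      simp
  -- the values at 2
  have h2v : ((2 : Fin (n+2)) : ℕ) = 2 := val2 hn
  have h2ne1 : ¬ (2 : Fin (n+2)) ≤ 1 := by
    simp only [Fin.le_def, Fin.val_one, h2v]; omega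
  have h2neL : (2 : Fin (n+2)) ≠ Fin.last (n+1) := by
    simp only [Fin.ne_iff_vne, Fin.val_last, h2v]; omega
  have htnuc2 : tnuc n 2 = ⟨n, by omega⟩ := by
    rw [tnuc_eq hn2]; simp [h2ne1, h2neL]
  have h2ne0 : (2 : Fin (n+2)) ≠ 0 := by
    simp only [Fin.ne_iff_vne, Fin.val_zero, h2v]; omega
  have hneg2 : rimp n (rimp n 2 0) 0 = Fin.last (n+1) := by
    rw [rimp_zero_right h2ne0, rimp_of_le le_rfl]
  refine ⟨comm, assoc, rmul_last_right, resid, clos, mono, idem, submul, ⟨?_, ?_⟩, ?_, ?_⟩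
  · rw [htnuc2]
    simp only [Fin.lt_def, h2v]; omega
  · rw [htnuc2, hneg2]
    simp only [Fin.lt_def, Fin.val_last]; omega
  · intro h
    have := congrFun h (2 : Fin (n+2))
    rw [htnuc2] at this
    have h' := congrArg Fin.val this
    simp only [id_eq, h2v] at h'
    omega
  · intro h
    have := congrFun h (2 : Fin (n+2))
    rw [htnuc2, hneg2] at this
    have h' := congrArg Fin.val this
    simp only [Fin.val_last] at h'
    omega
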